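/- Let k, and finite index sets Q_{ab} (for 1 ≤ a ≠ b ≤ d) be given, and let A_i ~ Bernoulli(α), B_i ~ Bernoulli(β), P_{ij} ~ Bernoulli(p), P_{a,ij} ~ Bernoulli(p_a) be mutually independent. Then Pr( Σ_{1≤a≠b≤d} Σ_{(i,j)∈Q_{ab}} P_{ij}·( P_{a,ij}·log(p_b/p_a) + (1−P_{a,ij})·log((1−p_b)/(1−p_a)) ) + log( α(1−β)/((1−α)β) ) · Σ_{i=1}^{2(n/2−k)k} (B_i − A_i) ≥ 0 ) ≤ (1 − p·(d_H^min)²)^{D_X} · (1 − d_H(α,β)²)^{4(n/2−k)k}, where D_X = Σ_{1≤a≠b≤d} |Q_{ab}|. -/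

import Mathlib

open Filter Finset Asymptotics
open scoped Classical

noncomputable section

namespace Paper

/-- Squared Hellinger distance between `Bernoulli x` and `Bernoulli y`. -/
def hellSq (x y : ℝ) : ℝ :=
  ((Real.sqrt x - Real.sqrt y) ^ 2 + (Real.sqrt (1 - x) - Real.sqrt (1 - y)) ^ 2) / 2

/-- Squared minimum Hellinger distance among the latent preference levels. -/
def dHminSq {d : ℕ} (lvl : Fin d → ℝ) : ℝ :=
  sInf {h : ℝ | ∃ i j : Fin d, i ≠ j ∧ h = hellSq (lvl i) (lvl j)}

/-- Graph information quantity `I_s = -2 log(1 - d_H(α,β)^2)`. -/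
def Is (α β : ℝ) : ℝ := -2 * Real.log (1 - hellSq α β)

/-- Observed rating matrices: `none` = unobserved (0), `some true` = +1, `some false` = −1. -/
abbrev RatingMatrix (N M : ℕ) := Fin N → Fin M → Option Bool

/-- Observed graphs on `N` users: an edge indicator on each unordered pair `(i, j)`, `i < j`. -/
abbrev ObsGraph (N : ℕ) := {e : Fin N × Fin N // e.1 < e.2} → Bool

/-- Likelihood of one rating entry. -/
def entryProb (p r : ℝ) : Option Bool → ℝ
  | none => 1 - p
  | some true => p * r
  | some false => p * (1 - r)

/-- Likelihood of an observed rating matrix given the latent preference matrix `R`. -/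
def ratingLik {N M : ℕ} (p : ℝ) (R : Fin N → Fin M → ℝ) (Nm : RatingMatrix N M) : ℝ :=
  ∏ i, ∏ j, entryProb p (R i j) (Nm i j)

/-- Likelihood of an observed graph under the symmetric SBM with cluster assignment `σ`. -/
def graphLik {N : ℕ} {κ : Type} [DecidableEq κ] (α β : ℝ) (σ : Fin N → κ)
    (g : ObsGraph N) : ℝ :=
  ∏ e : {e : Fin N × Fin N // e.1 < e.2},
    if σ e.1.1 = σ e.1.2 then (if g e then α else 1 - α) else (if g e then β else 1 - β)

/-- Joint likelihood of `(N^Ω, G)`. -/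
def outcomeProb {N M : ℕ} {κ : Type} [DecidableEq κ] (p α β : ℝ)
    (R : Fin N → Fin M → ℝ) (σ : Fin N → κ) (Nm : RatingMatrix N M) (g : ObsGraph N) : ℝ :=
  ratingLik p R Nm * graphLik α β σ g

/-- Probability of an event of `(N^Ω, G)` under the model `(R, σ, p, α, β)`. -/
def prEvent {N M : ℕ} {κ : Type} [DecidableEq κ] (p α β : ℝ)
    (R : Fin N → Fin M → ℝ) (σ : Fin N → κ)
    (S : RatingMatrix N M → ObsGraph N → Prop) : ℝ :=
  ∑ Nm : RatingMatrix N M, ∑ g : ObsGraph N, if S Nm g then outcomeProb p α β R σ Nm g else 0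

/-- Probability of an event of the graph `G` alone. -/
def grPrEvent {N : ℕ} {κ : Type} [DecidableEq κ] (α β : ℝ) (σ : Fin N → κ)
    (S : ObsGraph N → Prop) : ℝ :=
  ∑ g : ObsGraph N, if S g then graphLik α β σ g else 0

/-- Probability of an event of the rating matrix `N^Ω` alone. -/
def prRating {N M : ℕ} (p : ℝ) (R : Fin N → Fin M → ℝ)
    (S : RatingMatrix N M → Prop) : ℝ :=
  ∑ Nm : RatingMatrix N M, if S Nm then ratingLik p R Nm else 0

/-- Probability of a joint event of the rating matrix `N^Ω` and `m₀` column indices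
sampled uniformly at random from `[M]` with replacement, independently of `N^Ω`. -/
def prRatingSample {N M m₀ : ℕ} (p : ℝ) (R : Fin N → Fin M → ℝ)
    (S : RatingMatrix N M → (Fin m₀ → Fin M) → Prop) : ℝ :=
  ∑ Nm : RatingMatrix N M, ∑ s : Fin m₀ → Fin M,
    if S Nm s then ratingLik p R Nm * (1 / (M : ℝ)) ^ m₀ else 0

/-- Hamming distance between two vectors. -/
def hamming {M : ℕ} {X : Type*} (u v : Fin M → X) : ℕ :=
  (Finset.univ.filter fun j => u j ≠ v j).card

/-- Bernoulli weight. -/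
def bern (q : ℝ) (b : Bool) : ℝ := if b then q else 1 - q

/-- Real-valued indicator of a Boolean. -/
def bInd (b : Bool) : ℝ := if b then 1 else 0

/-- Adjacency of `i` and `i'` in an observed graph. -/
def adjB {N : ℕ} (g : ObsGraph N) (i i' : Fin N) : Bool :=
  if h : i < i' then g ⟨(i, i'), h⟩ else if h' : i' < i then g ⟨(i', i), h'⟩ else false

/-- `e({i}, A)`: number of edges between user `i` and the user set `A`. -/
def eCount {N : ℕ} (g : ObsGraph N) (i : Fin N) (A : Finset (Fin N)) : ℕ :=
  (A.filter fun i' => adjB g i i' = true).card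

/-- The local likelihood-difference statistic `L(i; A, B)`,
where `A = {i | c i = true}` and `B = {i | c i = false}`. -/
def Lstat {N M : ℕ} (α β : ℝ) (uvec vvec : Fin M → ℝ)
    (Nm : RatingMatrix N M) (g : ObsGraph N) (c : Fin N → Bool) (i : Fin N) : ℝ :=
  Real.log (α * (1 - β) / ((1 - α) * β)) *
      ((eCount g i (Finset.univ.filter fun i' => c i' = false) : ℝ)
        - (eCount g i (Finset.univ.filter fun i' => c i' = true) : ℝ))
    + ∑ j, (if Nm i j = some true then Real.log (vvec j / uvec j) else 0)
    + ∑ j, (if Nm i j = some false then Real.log ((1 - vvec j) / (1 - uvec j)) else 0)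

/-- Size of the `k`-th cluster. -/
def clusterSize {n K : ℕ} (C : Fin n → Fin K) (k : Fin K) : ℕ :=
  (Finset.univ.filter fun i => C i = k).card

/-- Worst-case error probability `P_e^γ(ψ)` for the two equal-sized cluster model
with `2 * n'` users. -/
def worstErr (n' M : ℕ) (p α β : ℝ) {d : ℕ} (lvl : Fin d → ℝ) (γ : ℝ)
    (ψ : RatingMatrix (2 * n') M → ObsGraph (2 * n') → Fin (2 * n') → Fin M → ℝ) : ℝ :=
  sSup {e : ℝ | ∃ (σ : Fin (2 * n') → Bool) (u v : Fin M → Fin d),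
    (Finset.univ.filter fun i => σ i = true).card = n' ∧
    hamming (fun j => lvl (u j)) (fun j => lvl (v j)) = ⌈γ * (M : ℝ)⌉₊ ∧
    e = prEvent p α β (fun i j => lvl (if σ i then u j else v j)) σ
      (fun Nm g => ψ Nm g ≠ fun i j => lvl (if σ i then u j else v j))}

end Paper

open Paper


namespace S7Helpers

open Paper

lemma exp_log_div_two {t : ℝ} (ht : 0 < t) :
    Real.exp (Real.log t / 2) = Real.sqrt t := by
  rw [Real.sqrt_eq_rpow, Real.rpow_def_of_pos ht]; ring_nf

lemma sum_fn_prod {ι X : Type*} [Fintype ι] [DecidableEq ι] [Fintype X] (g : ι → X → ℝ) :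
    (∑ f : ι → X, ∏ x, g x (f x)) = ∏ x, ∑ v, g x v := by
  rw [Finset.prod_univ_sum]
  exact (Finset.sum_congr (by simp) fun _ _ => rfl)

lemma sum_fn_prod2 {ι1 ι2 X : Type*} [Fintype ι1] [DecidableEq ι1] [Fintype ι2]
    [DecidableEq ι2] [Fintype X] (g : ι1 → ι2 → X → ℝ) :
    (∑ f : ι1 → ι2 → X, ∏ a, ∏ x, g a x (f a x)) = ∏ a, ∏ x, ∑ v, g a x v := by
  have h1 := sum_fn_prod (fun (a : ι1) (h : ι2 → X) => ∏ x, g a x (h x))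
  rw [h1]
  exact Finset.prod_congr rfl fun a _ => sum_fn_prod (g a)

lemma sum_fn_prod3 {ι1 ι2 ι3 X : Type*} [Fintype ι1] [DecidableEq ι1] [Fintype ι2]
    [DecidableEq ι2] [Fintype ι3] [DecidableEq ι3] [Fintype X] (g : ι1 → ι2 → ι3 → X → ℝ) :
    (∑ f : ι1 → ι2 → ι3 → X, ∏ a, ∏ b, ∏ x, g a b x (f a b x))
      = ∏ a, ∏ b, ∏ x, ∑ v, g a b x v := by
  have h1 := sum_fn_prod (fun (a : ι1) (h : ι2 → ι3 → X) => ∏ b, ∏ x, g a b x (h b x))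
  rw [h1]
  exact Finset.prod_congr rfl fun a _ => sum_fn_prod2 (g a)

lemma hellSq_nonneg (x y : ℝ) : 0 ≤ hellSq x y := by
  unfold hellSq; positivity

lemma hellSq_le_one {x y : ℝ} (hx0 : 0 ≤ x) (hx1 : x ≤ 1) (hy0 : 0 ≤ y) (hy1 : y ≤ 1) :
    hellSq x y ≤ 1 := by
  have h1 : Real.sqrt x ^ 2 = x := Real.sq_sqrt hx0
  have h2 : Real.sqrt y ^ 2 = y := Real.sq_sqrt hy0
  have h3 : Real.sqrt (1 - x) ^ 2 = 1 - x := Real.sq_sqrt (by linarith)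
  have h4 : Real.sqrt (1 - y) ^ 2 = 1 - y := Real.sq_sqrt (by linarith)
  unfold hellSq
  nlinarith [Real.sqrt_nonneg x, Real.sqrt_nonneg y,
    Real.sqrt_nonneg (1 - x), Real.sqrt_nonneg (1 - y)]

lemma bern_nonneg {q : ℝ} (h0 : 0 ≤ q) (h1 : q ≤ 1) (b : Bool) : 0 ≤ bern q b := by
  cases b <;> simp [bern] <;> linarith

lemma bern_sum {q r : ℝ} : (∑ v : Bool × Bool, bern q v.1 * bern r v.2) = 1 := by
  rw [Fintype.sum_prod_type]
  simp only [Fintype.sum_bool, bern, if_true, if_false]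
  norm_num
  ring

lemma rating_site {x y p : ℝ} (hx0 : 0 < x) (hx1 : x < 1) (hy0 : 0 < y) (hy1 : y < 1) :
    (∑ v : Bool × Bool, Real.exp ((bInd v.1 * (bInd v.2 * Real.log (y / x)
        + (1 - bInd v.2) * Real.log ((1 - y) / (1 - x)))) / 2)
      * (bern p v.1 * bern x v.2)) = 1 - p * hellSq x y := by
  have e1 : Real.exp (Real.log (y / x) / 2) = Real.sqrt y / Real.sqrt x := by
    rw [exp_log_div_two (by positivity), Real.sqrt_div' y hx0.le]
  have e2 : Real.exp (Real.log ((1 - y) / (1 - x)) / 2)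
      = Real.sqrt (1 - y) / Real.sqrt (1 - x) := by
    rw [exp_log_div_two (div_pos (by linarith) (by linarith)),
      Real.sqrt_div' (1 - y) (by linarith)]
  have hsx : (0:ℝ) < Real.sqrt x := Real.sqrt_pos.2 hx0
  have hsx' : (0:ℝ) < Real.sqrt (1 - x) := Real.sqrt_pos.2 (by linarith)
  have q1 : Real.sqrt x ^ 2 = x := Real.sq_sqrt hx0.le
  have q2 : Real.sqrt y ^ 2 = y := Real.sq_sqrt hy0.le
  have q3 : Real.sqrt (1 - x) ^ 2 = 1 - x := Real.sq_sqrt (by linarith)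
  have q4 : Real.sqrt (1 - y) ^ 2 = 1 - y := Real.sq_sqrt (by linarith)
  rw [Fintype.sum_prod_type]
  simp only [Fintype.sum_bool, bInd, bern, if_true, if_false]
  norm_num
  rw [e1, e2]
  have r1 : Real.sqrt y / Real.sqrt x * (p * x) = p * (Real.sqrt x * Real.sqrt y) := by
    field_simp; linear_combination (-p) * q1
  have r2 : Real.sqrt (1 - y) / Real.sqrt (1 - x) * (p * (1 - x))
      = p * (Real.sqrt (1 - x) * Real.sqrt (1 - y)) := by
    field_simp; linear_combination (-(p * Real.sqrt (1 - y))) * q3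
  rw [r1, r2]
  unfold hellSq
  linear_combination (p/2)*q1 + (p/2)*q2 + (p/2)*q3 + (p/2)*q4

lemma graph_site {α β : ℝ} (hβ0 : 0 < β) (hβα : β ≤ α) (hα1 : α < 1) :
    (∑ v : Bool × Bool,
      Real.exp (Real.log (α * (1 - β) / ((1 - α) * β)) * (bInd v.2 - bInd v.1) / 2)
        * (bern α v.1 * bern β v.2)) = (1 - hellSq α β) ^ 2 := by
  have hα0 : 0 < α := lt_of_lt_of_le hβ0 hβα
  have hβ1 : β < 1 := lt_of_le_of_lt hβα hα1
  have q1 : Real.sqrt α ^ 2 = α := Real.sq_sqrt hα0.le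
  have q2 : Real.sqrt β ^ 2 = β := Real.sq_sqrt hβ0.le
  have q3 : Real.sqrt (1 - α) ^ 2 = 1 - α := Real.sq_sqrt (by linarith)
  have q4 : Real.sqrt (1 - β) ^ 2 = 1 - β := Real.sq_sqrt (by linarith)
  have s1 : (0:ℝ) < Real.sqrt α := Real.sqrt_pos.2 hα0
  have s2 : (0:ℝ) < Real.sqrt β := Real.sqrt_pos.2 hβ0
  have s3 : (0:ℝ) < Real.sqrt (1 - α) := Real.sqrt_pos.2 (by linarith)
  have s4 : (0:ℝ) < Real.sqrt (1 - β) := Real.sqrt_pos.2 (by linarith)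
  set R : ℝ := α * (1 - β) / ((1 - α) * β) with hRdef
  have hR0 : 0 < R := by apply div_pos <;> nlinarith
  have hRsq : R = (Real.sqrt α * Real.sqrt (1 - β)
      / (Real.sqrt (1 - α) * Real.sqrt β)) ^ 2 := by
    rw [div_pow, mul_pow, mul_pow, q1, q2, q3, q4]
  have eplus : Real.exp (Real.log R / 2)
      = Real.sqrt α * Real.sqrt (1 - β) / (Real.sqrt (1 - α) * Real.sqrt β) := by
    rw [exp_log_div_two hR0, hRsq, Real.sqrt_sq (by positivity)]
  have eminus : Real.exp (-(Real.log R) / 2)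
      = Real.sqrt (1 - α) * Real.sqrt β / (Real.sqrt α * Real.sqrt (1 - β)) := by
    rw [← Real.log_inv, exp_log_div_two (by positivity), hRsq, ← inv_pow,
      Real.sqrt_sq (by positivity), inv_div]
  rw [Fintype.sum_prod_type]
  simp only [Fintype.sum_bool, bInd, bern, if_true, if_false]
  norm_num
  rw [eplus, eminus]
  have hh : 1 - hellSq α β
      = Real.sqrt α * Real.sqrt β + Real.sqrt (1 - α) * Real.sqrt (1 - β) := by
    unfold hellSq
    linear_combination (-(1:ℝ)/2)*q1 + (-(1:ℝ)/2)*q2 + (-(1:ℝ)/2)*q3 + (-(1:ℝ)/2)*q4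
  have t2 : Real.sqrt α * Real.sqrt (1 - β) / (Real.sqrt (1 - α) * Real.sqrt β)
        * ((1 - α) * β)
      = Real.sqrt α * Real.sqrt (1 - β) * (Real.sqrt (1 - α) * Real.sqrt β) := by
    rw [div_mul_eq_mul_div, div_eq_iff (by positivity)]
    linear_combination (-(Real.sqrt α * Real.sqrt (1-β) * β))*q3
      + (-(Real.sqrt α * Real.sqrt (1-β) * Real.sqrt (1-α)^2))*q2
  have t3 : Real.sqrt (1 - α) * Real.sqrt β / (Real.sqrt α * Real.sqrt (1 - β))
        * (α * (1 - β))
      = Real.sqrt α * Real.sqrt (1 - β) * (Real.sqrt (1 - α) * Real.sqrt β) := by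
    rw [div_mul_eq_mul_div, div_eq_iff (by positivity)]
    linear_combination (-(Real.sqrt (1-α) * Real.sqrt β * (1-β)))*q1
      + (-(Real.sqrt (1-α) * Real.sqrt β * Real.sqrt α^2))*q4
  rw [t2, t3, hh]
  linear_combination (-(Real.sqrt β^2))*q1 + (-α)*q2 + (-(Real.sqrt (1-β)^2))*q3 + (-(1-α))*q4

lemma expand_exp1 {d : ℕ} {ι : Type} [Fintype ι] [DecidableEq ι]
    (Q : Fin d → Fin d → Finset ι)
    (t : Fin d → Fin d → (Bool × Bool) → ℝ) (w : Fin d → (Bool × Bool) → ℝ)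
    (f : Fin d → Fin d → ι → Bool × Bool) :
    Real.exp ((∑ a, ∑ b, if a ≠ b then ∑ x ∈ Q a b, t a b (f a b x) else 0) / 2)
        * ∏ a, ∏ b, ∏ x, w a (f a b x)
      = ∏ a, ∏ b, ∏ x, (if a ≠ b ∧ x ∈ Q a b then Real.exp (t a b (f a b x) / 2) else 1)
          * w a (f a b x) := by
  rw [Finset.sum_div, Real.exp_sum, ← Finset.prod_mul_distrib]
  refine Finset.prod_congr rfl fun a _ => ?_
  rw [Finset.sum_div, Real.exp_sum, ← Finset.prod_mul_distrib]
  refine Finset.prod_congr rfl fun b _ => ?_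
  have key : Real.exp ((if a ≠ b then ∑ x ∈ Q a b, t a b (f a b x) else 0) / 2)
      = ∏ x : ι, (if a ≠ b ∧ x ∈ Q a b then Real.exp (t a b (f a b x) / 2) else 1) := by
    by_cases hab : a ≠ b
    · rw [if_pos hab, Finset.sum_div, Real.exp_sum, ← Finset.univ_inter (Q a b),
        ← Finset.prod_ite_mem Finset.univ (Q a b)]
      exact Finset.prod_congr rfl fun x _ => by by_cases hx : x ∈ Q a b <;> simp [hx, hab]
    · rw [if_neg hab]
      simp only [zero_div, Real.exp_zero]
      exact ((Finset.prod_congr rfl fun x _ =>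
        if_neg fun hc => hab hc.1).trans Finset.prod_const_one).symm
  rw [key, ← Finset.prod_mul_distrib]

lemma expand_exp2 {N : ℕ} (L : ℝ) (w : (Bool × Bool) → ℝ) (h : Fin N → Bool × Bool) :
    Real.exp (L * (∑ l, (bInd (h l).2 - bInd (h l).1)) / 2) * ∏ l, w (h l)
      = ∏ l, Real.exp (L * (bInd (h l).2 - bInd (h l).1) / 2) * w (h l) := by
  rw [Finset.mul_sum, Finset.sum_div, Real.exp_sum, ← Finset.prod_mul_distrib]

end S7Helpers

open S7Helpers


/-- Lemma 3, Chernoff bound: for given `k` and finite index sets `Q a b`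
(for `a ≠ b`), with all the displayed Bernoulli variables mutually independent,
`Pr(Z ≥ 0) ≤ (1 − p·(d_H^min)²)^{D_X} · (1 − d_H(α,β)²)^{4(n/2−k)k}` where
`D_X = Σ_{a≠b} |Q a b|` (here `n = 2n'`, and `k ≤ n/4` reads `2k ≤ n'`). -/
theorem statement7
    (n' d : ℕ) (hd : 1 ≤ d) (lvl : Fin d → ℝ)
    (hmono : StrictMono lvl) (hlvl0 : ∀ t, 0 < lvl t) (hlvl1 : ∀ t, lvl t < 1)
    (p α β : ℝ) (hp0 : 0 < p) (hp1 : p < 1)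
    (hβ0 : 0 < β) (hβα : β ≤ α) (hα1 : α < 1)
    (k : ℕ) (hk : 2 * k ≤ n')
    (ι : Type) [Fintype ι] (Q : Fin d → Fin d → Finset ι) :
    (∑ ω : (Fin d → Fin d → ι → Bool × Bool) × (Fin (2 * (n' - k) * k) → Bool × Bool),
      if 0 ≤
          (∑ a : Fin d, ∑ b : Fin d, if a ≠ b then
            (∑ x ∈ Q a b,
              bInd (ω.1 a b x).1 *
                (bInd (ω.1 a b x).2 * Real.log (lvl b / lvl a)
                  + (1 - bInd (ω.1 a b x).2) * Real.log ((1 - lvl b) / (1 - lvl a))))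
            else 0)
          + Real.log (α * (1 - β) / ((1 - α) * β)) *
              (∑ l : Fin (2 * (n' - k) * k), (bInd (ω.2 l).2 - bInd (ω.2 l).1))
      then
        (∏ a : Fin d, ∏ b : Fin d, ∏ x : ι,
            bern p (ω.1 a b x).1 * bern (lvl a) (ω.1 a b x).2)
          * (∏ l : Fin (2 * (n' - k) * k), bern α (ω.2 l).1 * bern β (ω.2 l).2)
      else 0)
    ≤ (1 - p * dHminSq lvl) ^ (∑ a : Fin d, ∑ b : Fin d, if a ≠ b then (Q a b).card else 0)
      * (1 - hellSq α β) ^ (4 * (n' - k) * k) := by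
  classical
  have hα0 : 0 < α := hβ0.trans_le hβα
  have hβ1 : β < 1 := hβα.trans_lt hα1
  set L := Real.log (α * (1 - β) / ((1 - α) * β)) with hLdef
  set t : Fin d → Fin d → (Bool × Bool) → ℝ := fun a b v =>
    bInd v.1 * (bInd v.2 * Real.log (lvl b / lvl a)
      + (1 - bInd v.2) * Real.log ((1 - lvl b) / (1 - lvl a))) with ht
  set g1 : Fin d → Fin d → ι → (Bool × Bool) → ℝ := fun a b x v =>
    (if a ≠ b ∧ x ∈ Q a b then Real.exp (t a b v / 2) else 1)
      * (bern p v.1 * bern (lvl a) v.2) with hg1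
  set g2 : (Bool × Bool) → ℝ := fun v =>
    Real.exp (L * (bInd v.2 - bInd v.1) / 2) * (bern α v.1 * bern β v.2) with hg2
  have hhell1 : hellSq α β ≤ 1 := hellSq_le_one hα0.le hα1.le hβ0.le hβ1.le
  -- Step A : pointwise Chernoff bound
  have stepA : (∑ ω : (Fin d → Fin d → ι → Bool × Bool) × (Fin (2 * (n' - k) * k) → Bool × Bool),
      if 0 ≤
          (∑ a : Fin d, ∑ b : Fin d, if a ≠ b then
            (∑ x ∈ Q a b,
              bInd (ω.1 a b x).1 *
                (bInd (ω.1 a b x).2 * Real.log (lvl b / lvl a)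
                  + (1 - bInd (ω.1 a b x).2) * Real.log ((1 - lvl b) / (1 - lvl a))))
            else 0)
          + L * (∑ l : Fin (2 * (n' - k) * k), (bInd (ω.2 l).2 - bInd (ω.2 l).1))
      then
        (∏ a : Fin d, ∏ b : Fin d, ∏ x : ι,
            bern p (ω.1 a b x).1 * bern (lvl a) (ω.1 a b x).2)
          * (∏ l : Fin (2 * (n' - k) * k), bern α (ω.2 l).1 * bern β (ω.2 l).2)
      else 0)
    ≤ ∑ ω : (Fin d → Fin d → ι → Bool × Bool) × (Fin (2 * (n' - k) * k) → Bool × Bool),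
        (∏ a, ∏ b, ∏ x, g1 a b x (ω.1 a b x)) * (∏ l, g2 (ω.2 l)) := by
    refine Finset.sum_le_sum fun ω _ => ?_
    have hW : 0 ≤ (∏ a : Fin d, ∏ b : Fin d, ∏ x : ι,
          bern p (ω.1 a b x).1 * bern (lvl a) (ω.1 a b x).2)
        * (∏ l : Fin (2 * (n' - k) * k), bern α (ω.2 l).1 * bern β (ω.2 l).2) :=
      mul_nonneg
        (Finset.prod_nonneg fun a _ => Finset.prod_nonneg fun b _ =>
          Finset.prod_nonneg fun x _ => mul_nonneg (bern_nonneg hp0.le hp1.le _)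
            (bern_nonneg (hlvl0 a).le (hlvl1 a).le _))
        (Finset.prod_nonneg fun l _ => mul_nonneg (bern_nonneg hα0.le hα1.le _)
          (bern_nonneg hβ0.le hβ1.le _))
    have e1 := expand_exp1 Q t (fun a v => bern p v.1 * bern (lvl a) v.2) ω.1
    have e2 := expand_exp2 L (fun v => bern α v.1 * bern β v.2) ω.2
    simp only [ht] at e1
    have key : (∏ a, ∏ b, ∏ x, g1 a b x (ω.1 a b x)) * (∏ l, g2 (ω.2 l))
        = Real.exp (((∑ a : Fin d, ∑ b : Fin d, if a ≠ b then
            (∑ x ∈ Q a b,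
              bInd (ω.1 a b x).1 *
                (bInd (ω.1 a b x).2 * Real.log (lvl b / lvl a)
                  + (1 - bInd (ω.1 a b x).2) * Real.log ((1 - lvl b) / (1 - lvl a))))
            else 0)
          + L * (∑ l : Fin (2 * (n' - k) * k), (bInd (ω.2 l).2 - bInd (ω.2 l).1))) / 2)
          * ((∏ a : Fin d, ∏ b : Fin d, ∏ x : ι,
              bern p (ω.1 a b x).1 * bern (lvl a) (ω.1 a b x).2)
            * (∏ l : Fin (2 * (n' - k) * k), bern α (ω.2 l).1 * bern β (ω.2 l).2)) := by
      simp only [hg1, hg2, ht]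
      rw [← e1, ← e2, add_div, Real.exp_add]
      ring
    rw [key]
    split_ifs with h
    · exact le_mul_of_one_le_left hW (Real.one_le_exp (by positivity))
    · exact mul_nonneg (Real.exp_nonneg _) hW
  refine le_trans stepA ?_
  -- Step B : factorize the sum
  have stepB : (∑ ω : (Fin d → Fin d → ι → Bool × Bool) × (Fin (2 * (n' - k) * k) → Bool × Bool),
        (∏ a, ∏ b, ∏ x, g1 a b x (ω.1 a b x)) * (∏ l, g2 (ω.2 l)))
      = (∑ f : Fin d → Fin d → ι → Bool × Bool, ∏ a, ∏ b, ∏ x, g1 a b x (f a b x))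
        * (∑ h : Fin (2 * (n' - k) * k) → Bool × Bool, ∏ l, g2 (h l)) := by
    rw [Fintype.sum_prod_type, Finset.sum_mul_sum]
  rw [stepB]
  -- Step C : first factor
  have hF1 : (∑ f : Fin d → Fin d → ι → Bool × Bool, ∏ a, ∏ b, ∏ x, g1 a b x (f a b x))
      = ∏ a, ∏ b, ∏ x : ι, ∑ v, g1 a b x v := sum_fn_prod3 g1
  have site1 : ∀ (a b : Fin d) (x : ι), (∑ v : Bool × Bool, g1 a b x v)
      = if a ≠ b ∧ x ∈ Q a b then 1 - p * hellSq (lvl a) (lvl b) else 1 := by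
    intro a b x
    by_cases hc : a ≠ b ∧ x ∈ Q a b
    · simp only [hg1, ht, if_pos hc]
      exact rating_site (hlvl0 a) (hlvl1 a) (hlvl0 b) (hlvl1 b)
    · simp only [hg1, ht, if_neg hc, one_mul]
      exact bern_sum
  have hmin_le : ∀ a b : Fin d, a ≠ b → dHminSq lvl ≤ hellSq (lvl a) (lvl b) := by
    intro a b hab
    refine csInf_le ⟨0, ?_⟩ ⟨a, b, hab, rfl⟩
    rintro z ⟨i, j, -, rfl⟩
    exact hellSq_nonneg _ _
  have hsite0 : ∀ a b : Fin d, 0 ≤ 1 - p * hellSq (lvl a) (lvl b) := by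
    intro a b
    have h1 := hellSq_le_one (hlvl0 a).le (hlvl1 a).le (hlvl0 b).le (hlvl1 b).le
    have h0 := hellSq_nonneg (lvl a) (lvl b)
    nlinarith
  have hRHS1 : (1 - p * dHminSq lvl) ^ (∑ a : Fin d, ∑ b : Fin d, if a ≠ b then (Q a b).card else 0)
      = ∏ a : Fin d, ∏ b : Fin d, ∏ x : ι,
          (if a ≠ b ∧ x ∈ Q a b then 1 - p * dHminSq lvl else 1) := by
    rw [← Finset.prod_pow_eq_pow_sum]
    refine Finset.prod_congr rfl fun a _ => ?_
    rw [← Finset.prod_pow_eq_pow_sum]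
    refine Finset.prod_congr rfl fun b _ => ?_
    by_cases hab : a ≠ b
    · rw [if_pos hab, ← Finset.prod_const, ← Finset.univ_inter (Q a b),
        ← Finset.prod_ite_mem Finset.univ (Q a b)]
      exact Finset.prod_congr rfl fun x _ => by by_cases hx : x ∈ Q a b <;> simp [hx, hab]
    · rw [if_neg hab, pow_zero]
      exact ((Finset.prod_congr rfl fun x _ =>
        if_neg fun hc => hab hc.1).trans Finset.prod_const_one).symm
  have hF1le : (∑ f : Fin d → Fin d → ι → Bool × Bool, ∏ a, ∏ b, ∏ x, g1 a b x (f a b x))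
      ≤ (1 - p * dHminSq lvl) ^ (∑ a : Fin d, ∑ b : Fin d, if a ≠ b then (Q a b).card else 0) := by
    rw [hF1, hRHS1]
    refine Finset.prod_le_prod (fun a _ => Finset.prod_nonneg fun b _ =>
        Finset.prod_nonneg fun x _ => ?_) (fun a _ => ?_)
    · rw [site1]
      split_ifs with hc
      · exact hsite0 a b
      · exact zero_le_one
    · refine Finset.prod_le_prod (fun b _ => Finset.prod_nonneg fun x _ => ?_) (fun b _ => ?_)
      · rw [site1]
        split_ifs with hc
        · exact hsite0 a b
        · exact zero_le_one
      · refine Finset.prod_le_prod (fun x _ => ?_) (fun x _ => ?_)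
        · rw [site1]
          split_ifs with hc
          · exact hsite0 a b
          · exact zero_le_one
        · rw [site1]
          split_ifs with hc
          · have := hmin_le a b hc.1
            nlinarith
          · exact le_refl 1
  -- Step D : second factor
  have hF2 : (∑ h : Fin (2 * (n' - k) * k) → Bool × Bool, ∏ l, g2 (h l))
      = (1 - hellSq α β) ^ (4 * (n' - k) * k) := by
    have h2 := sum_fn_prod (fun (_ : Fin (2 * (n' - k) * k)) (v : Bool × Bool) => g2 v)
    rw [h2]
    have hsum : (∑ v : Bool × Bool, g2 v) = (1 - hellSq α β) ^ 2 := by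
      simp only [hg2, hLdef]
      exact graph_site hβ0 hβα hα1
    rw [Finset.prod_congr rfl fun l _ => hsum, Finset.prod_const, Finset.card_univ,
      Fintype.card_fin, ← pow_mul]
    congr 1
    ring
  rw [hF2]
  exact mul_le_mul_of_nonneg_right hF1le (pow_nonneg (by linarith) _)
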